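/- Let L > 0 and suppose that almost surely |τ̂| ≤ L and |τ̂_k(X)| ≤ L for every k ∈ {1,…,K}. Let (X_i, Y_i, Z_i), i = 1,…,m, be i.i.d. copies of (X, Y, Z) with pseudo-outcomes τ̂_i. Then for every δ ∈ (0,1), with probability at least 1 − δ, the empirical stacking loss is uniformly close to the population stacking loss over the simplex: sup_{w ∈ Δ_K} |ℓ̂(w) − ℓ(w)| ≤ 4√2 · L² · √(log(2(K+1)²/δ)/m). -/

import Mathlib

open MeasureTheory ProbabilityTheory
open scoped ENNReal

section HoeffdingAux

open Real

lemma hoeffding_kernel {q : ℝ} (hq0 : 0 ≤ q) (hq1 : q ≤ 1) (x : ℝ) :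
    1 - q + q * exp x ≤ exp (q * x + x ^ 2 / 8) := by
  set G : ℝ → ℝ := fun x => 1 - q + q * exp x with hGdef
  have hGpos : ∀ x, 0 < G x := by
    intro x
    rcases eq_or_lt_of_le hq0 with h | h
    · simp [hGdef, ← h]
    · have : 0 < q * exp x := mul_pos h (exp_pos x)
      have : (0:ℝ) ≤ 1 - q := by linarith
      simp only [hGdef]
      nlinarith [exp_pos x, mul_pos h (exp_pos x)]
  set F : ℝ → ℝ := fun x => q * x + x ^ 2 / 8 - log (G x) with hFdef
  set F₁ : ℝ → ℝ := fun x => q + x / 4 - q * exp x / G x with hF1def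
  have hG : ∀ x, HasDerivAt G (q * exp x) x := by
    intro x
    exact ((hasDerivAt_exp x).const_mul q).const_add (1 - q)
  have hF : ∀ x, HasDerivAt F (F₁ x) x := by
    intro x
    have h1 : HasDerivAt (fun x => q * x + x ^ 2 / 8) (q + x / 4) x := by
      have := ((hasDerivAt_id x).const_mul q).add
        (((hasDerivAt_pow 2 x).div_const 8))
      exact this.congr_deriv (by push_cast; ring)
    have h2 : HasDerivAt (fun x => log (G x)) (q * exp x / G x) x :=
      (hG x).log (hGpos x).ne'
    exact h1.sub h2
  have hF1 : ∀ x, HasDerivAt F₁ (1 / 4 - q * exp x * (1 - q) / (G x) ^ 2) x := by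
    intro x
    have h1 : HasDerivAt (fun x => q + x / 4) (1 / 4) x := by
      simpa using ((hasDerivAt_id x).div_const 4).const_add q
    have h2 : HasDerivAt (fun x => q * exp x / G x)
        ((q * exp x * G x - q * exp x * (q * exp x)) / (G x) ^ 2) x :=
      ((hasDerivAt_exp x).const_mul q).div (hG x) (hGpos x).ne'
    have heq : (q * exp x * G x - q * exp x * (q * exp x)) / (G x) ^ 2
        = q * exp x * (1 - q) / (G x) ^ 2 := by
      congr 1
      simp only [hGdef]
      ring
    rw [heq] at h2
    exact h1.sub h2
  have hF1deriv_nonneg : ∀ x, 0 ≤ 1 / 4 - q * exp x * (1 - q) / (G x) ^ 2 := by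
    intro x
    rw [sub_nonneg, div_le_iff₀ (pow_pos (hGpos x) 2)]
    have : (0:ℝ) ≤ ((1 - q) - q * exp x) ^ 2 := sq_nonneg _
    simp only [hGdef]
    nlinarith [sq_nonneg ((1 - q) - q * exp x)]
  have hF1mono : Monotone F₁ := by
    apply monotone_of_deriv_nonneg
    · exact fun x => (hF1 x).differentiableAt
    · intro x
      rw [(hF1 x).deriv]
      exact hF1deriv_nonneg x
  have hF1zero : F₁ 0 = 0 := by
    simp [hF1def, hGdef]
  have hFnonneg : ∀ x, 0 ≤ F x := by
    have hFzero : F 0 = 0 := by simp [hFdef, hGdef]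
    intro x
    rcases le_total 0 x with hx | hx
    · have : MonotoneOn F (Set.Ici 0) := by
        apply monotoneOn_of_deriv_nonneg (convex_Ici 0)
        · exact Continuous.continuousOn (by
            fun_prop (disch := intro x; exact (hGpos x).ne'))
        · intro y hy
          exact (hF y).differentiableAt.differentiableWithinAt
        · intro y hy
          rw [(hF y).deriv]
          rw [interior_Ici] at hy
          have : (0:ℝ) ≤ F₁ y := by
            rw [← hF1zero]
            exact hF1mono (le_of_lt hy)
          exact this
      rw [← hFzero]
      exact this (by simp) (by simpa using hx) hx
    · have : AntitoneOn F (Set.Iic 0) := by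
        apply antitoneOn_of_deriv_nonpos (convex_Iic 0)
        · exact Continuous.continuousOn (by
            fun_prop (disch := intro x; exact (hGpos x).ne'))
        · intro y hy
          exact (hF y).differentiableAt.differentiableWithinAt
        · intro y hy
          rw [(hF y).deriv]
          rw [interior_Iic] at hy
          have : F₁ y ≤ 0 := by
            rw [← hF1zero]
            exact hF1mono (le_of_lt hy)
          exact this
      rw [← hFzero]
      exact this (by simpa using hx) (by simp) hx
  have := hFnonneg x
  have hlog : log (G x) ≤ q * x + x ^ 2 / 8 := by
    simp only [hFdef] at this
    linarith
  calc G x = exp (log (G x)) := (exp_log (hGpos x)).symm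
  _ ≤ exp (q * x + x ^ 2 / 8) := exp_le_exp.2 hlog

lemma mgf_le_of_mean_zero {Ω : Type*} [MeasurableSpace Ω] (μ : Measure Ω)
    [IsProbabilityMeasure μ] (X : Ω → ℝ) (hX : Measurable X) (a b : ℝ)
    (hab : ∀ᵐ ω ∂μ, X ω ∈ Set.Icc a b) (hmean : ∫ ω, X ω ∂μ = 0) (t : ℝ) :
    mgf X μ t ≤ exp (t ^ 2 * (b - a) ^ 2 / 8) := by
  have hInt : Integrable X μ := by
    refine Integrable.mono' (integrable_const (max |a| |b|)) hX.aestronglyMeasurable ?_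
    filter_upwards [hab] with ω hω
    exact abs_le_max_abs_abs hω.1 hω.2
  have ha0 : a ≤ 0 := by
    have h1 : ∫ _ω, a ∂μ ≤ ∫ ω, X ω ∂μ := by
      refine integral_mono_ae (integrable_const a) hInt ?_
      filter_upwards [hab] with ω hω using hω.1
    simpa [hmean] using h1
  have hb0 : 0 ≤ b := by
    have h1 : ∫ ω, X ω ∂μ ≤ ∫ _ω, b ∂μ := by
      refine integral_mono_ae hInt (integrable_const b) ?_
      filter_upwards [hab] with ω hω using hω.2
    simpa [hmean] using h1
  rcases eq_or_lt_of_le (ha0.trans hb0) with hab' | hab'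
  · have ha : a = 0 := le_antisymm ha0 (by rw [hab']; exact hb0)
    have hb : b = 0 := by rw [← hab', ha]
    have hX0 : ∀ᵐ ω ∂μ, X ω = 0 := by
      filter_upwards [hab] with ω hω
      rw [ha, hb] at hω
      exact le_antisymm hω.2 hω.1
    have hmgf : mgf X μ t = 1 := by
      unfold mgf
      rw [integral_congr_ae (g := fun _ => (1:ℝ)) ?_]
      · simp
      · filter_upwards [hX0] with ω hω; simp [hω]
    rw [hmgf]
    exact one_le_exp (by positivity)
  · have hba : (0:ℝ) < b - a := sub_pos.2 hab'
    set c₀ : ℝ := b / (b - a) * exp (t * a) - a / (b - a) * exp (t * b) with hc₀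
    set c₁ : ℝ := (exp (t * b) - exp (t * a)) / (b - a) with hc₁
    have hpt : ∀ᵐ ω ∂μ, exp (t * X ω) ≤ c₀ + c₁ * X ω := by
      filter_upwards [hab] with ω hω
      have hα : 0 ≤ (b - X ω) / (b - a) := div_nonneg (by linarith [hω.2]) hba.le
      have hβ : 0 ≤ (X ω - a) / (b - a) := div_nonneg (by linarith [hω.1]) hba.le
      have hαβ : (b - X ω) / (b - a) + (X ω - a) / (b - a) = 1 := by
        field_simp
        ring
      have key := convexOn_exp.2 (Set.mem_univ (t * a)) (Set.mem_univ (t * b)) hα hβ hαβ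
      simp only [smul_eq_mul] at key
      have harg : (b - X ω) / (b - a) * (t * a) + (X ω - a) / (b - a) * (t * b)
          = t * X ω := by field_simp; ring
      rw [harg] at key
      refine key.trans (le_of_eq ?_)
      rw [hc₀, hc₁]
      field_simp
      ring
    have hIntExp : Integrable (fun ω => exp (t * X ω)) μ := by
      refine Integrable.mono' (integrable_const (exp (|t| * max |a| |b|)))
        ((hX.const_mul t).exp.aestronglyMeasurable) ?_
      filter_upwards [hab] with ω hω
      rw [Real.norm_eq_abs, abs_of_pos (exp_pos _), exp_le_exp]
      calc t * X ω ≤ |t * X ω| := le_abs_self _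
      _ = |t| * |X ω| := abs_mul _ _
      _ ≤ |t| * max |a| |b| := by
          exact mul_le_mul_of_nonneg_left (abs_le_max_abs_abs hω.1 hω.2) (abs_nonneg t)
    have hmgf_le : mgf X μ t ≤ c₀ := by
      have h1 : mgf X μ t ≤ ∫ ω, (c₀ + c₁ * X ω) ∂μ :=
        integral_mono_ae hIntExp ((integrable_const c₀).add (hInt.const_mul c₁)) hpt
      have h2 : ∫ ω, (c₀ + c₁ * X ω) ∂μ = c₀ := by
        rw [integral_add (integrable_const c₀) (hInt.const_mul c₁),
          MeasureTheory.integral_const_mul, hmean]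
        simp
      rwa [h2] at h1
    refine hmgf_le.trans ?_
    set q : ℝ := -a / (b - a) with hq
    have hq0 : 0 ≤ q := div_nonneg (by linarith) hba.le
    have hq1 : q ≤ 1 := by
      rw [hq, div_le_one hba]
      linarith
    have hc₀eq : c₀ = exp (t * a) * (1 - q + q * exp (t * (b - a))) := by
      have hexpb : exp (t * b) = exp (t * a) * exp (t * (b - a)) := by
        rw [← exp_add]; ring_nf
      rw [hc₀, hq, hexpb]
      field_simp
      ring
    rw [hc₀eq]
    have hker := hoeffding_kernel hq0 hq1 (t * (b - a))
    calc exp (t * a) * (1 - q + q * exp (t * (b - a)))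
        ≤ exp (t * a) * exp (q * (t * (b - a)) + (t * (b - a)) ^ 2 / 8) :=
          mul_le_mul_of_nonneg_left hker (exp_pos _).le
    _ = exp (t * a + (q * (t * (b - a)) + (t * (b - a)) ^ 2 / 8)) := by rw [← exp_add]
    _ = exp (t ^ 2 * (b - a) ^ 2 / 8) := by
        congr 1
        rw [hq]
        field_simp
        ring

lemma hoeffding_one_sided {Ω : Type*} [MeasurableSpace Ω] (P : Measure Ω)
    [IsProbabilityMeasure P] {m : ℕ} (hm : 0 < m) (V : Fin m → Ω → ℝ)
    (hV : ∀ i, Measurable (V i))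
    (hindep : iIndepFun V P)
    (a b : ℝ) (hab : a < b)
    (hbdd : ∀ i, ∀ᵐ ω ∂P, V i ω ∈ Set.Icc a b)
    (hmean : ∀ i, ∫ ω, V i ω ∂P = 0) (ε : ℝ) (hε : 0 < ε) :
    (P {ω | ε ≤ (∑ i, V i) ω}).toReal
      ≤ exp (-2 * ε ^ 2 / (m * (b - a) ^ 2)) := by
  have hba : (0:ℝ) < b - a := sub_pos.2 hab
  have hm0 : (0:ℝ) < m := Nat.cast_pos.2 hm
  set lam : ℝ := 4 * ε / (m * (b - a) ^ 2) with hlam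
  have hlam0 : 0 < lam := by positivity
  have hIntExp : ∀ i, Integrable (fun ω => exp (lam * V i ω)) P := by
    intro i
    refine Integrable.mono' (integrable_const (exp (|lam| * max |a| |b|)))
      (((hV i).const_mul lam).exp.aestronglyMeasurable) ?_
    filter_upwards [hbdd i] with ω hω
    rw [Real.norm_eq_abs, abs_of_pos (exp_pos _), exp_le_exp]
    calc lam * V i ω ≤ |lam * V i ω| := le_abs_self _
    _ = |lam| * |V i ω| := abs_mul _ _
    _ ≤ |lam| * max |a| |b| :=
        mul_le_mul_of_nonneg_left (abs_le_max_abs_abs hω.1 hω.2) (abs_nonneg _)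
  have hIntSum : Integrable (fun ω => exp (lam * (∑ i, V i) ω)) P :=
    hindep.integrable_exp_mul_sum hV (fun i _ => hIntExp i)
  have hChernoff := measure_ge_le_exp_mul_mgf (μ := P) (X := ∑ i, V i) ε hlam0.le hIntSum
  have hmgf : mgf (∑ i, V i) P lam ≤ exp (m * (lam ^ 2 * (b - a) ^ 2 / 8)) := by
    rw [hindep.mgf_sum hV Finset.univ]
    calc ∏ i, mgf (V i) P lam
        ≤ ∏ _i : Fin m, exp (lam ^ 2 * (b - a) ^ 2 / 8) :=
          Finset.prod_le_prod (fun i _ => mgf_nonneg)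
            (fun i _ => mgf_le_of_mean_zero P (V i) (hV i) a b (hbdd i) (hmean i) lam)
    _ = exp ((m : ℝ) * (lam ^ 2 * (b - a) ^ 2 / 8)) := by
        rw [Finset.prod_const, ← Real.exp_nat_mul]
        simp [Finset.card_univ]
  refine hChernoff.trans ?_
  calc exp (-lam * ε) * mgf (∑ i, V i) P lam
      ≤ exp (-lam * ε) * exp ((m : ℝ) * (lam ^ 2 * (b - a) ^ 2 / 8)) :=
        mul_le_mul_of_nonneg_left hmgf (exp_pos _).le
  _ = exp (-lam * ε + (m : ℝ) * (lam ^ 2 * (b - a) ^ 2 / 8)) := by rw [← exp_add]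
  _ = exp (-2 * ε ^ 2 / (m * (b - a) ^ 2)) := by
      congr 1
      rw [hlam]
      field_simp
      ring

lemma hoeffding_two_sided {Ω : Type*} [MeasurableSpace Ω] (P : Measure Ω)
    [IsProbabilityMeasure P] {m : ℕ} (hm : 0 < m) (W : Fin m → Ω → ℝ)
    (hW : ∀ i, Measurable (W i))
    (hindep : iIndepFun W P)
    (c : ℝ) (hc : 0 < c) (hbdd : ∀ i, ∀ᵐ ω ∂P, |W i ω| ≤ c)
    (D : ℝ) (hD : ∀ i, ∫ ω, W i ω ∂P = D) (t : ℝ) (ht : 0 < t) :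
    (P {ω | t ≤ |(1 / m : ℝ) * ∑ i, W i ω - D|}).toReal
      ≤ 2 * exp (-(m * t ^ 2) / (2 * c ^ 2)) := by
  have hm0 : (0:ℝ) < m := Nat.cast_pos.2 hm
  set V : Fin m → Ω → ℝ := fun i ω => W i ω - D with hVdef
  have hVmeas : ∀ i, Measurable (V i) := fun i => (hW i).sub_const D
  have hVindep : iIndepFun V P := by
    have := hindep.comp (g := fun _ => fun x : ℝ => x - D)
      (fun _ => measurable_id.sub_const D)
    exact this
  have hVbdd : ∀ i, ∀ᵐ ω ∂P, V i ω ∈ Set.Icc (-c - D) (c - D) := by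
    intro i
    filter_upwards [hbdd i] with ω hω
    have := abs_le.1 hω
    constructor <;> simp only [hVdef] <;> [linarith [this.1]; linarith [this.2]]
  have hWint : ∀ i, Integrable (W i) P := by
    intro i
    refine Integrable.mono' (integrable_const c) (hW i).aestronglyMeasurable ?_
    filter_upwards [hbdd i] with ω hω using hω
  have hVmean : ∀ i, ∫ ω, V i ω ∂P = 0 := by
    intro i
    simp only [hVdef]
    rw [integral_sub (hWint i) (integrable_const D), hD i]
    simp
  have hNVindep : iIndepFun (fun i => -(V i)) P := by
    have := hVindep.comp (g := fun _ => fun x : ℝ => -x) (fun _ => measurable_neg)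
    exact this
  have hNVbdd : ∀ i, ∀ᵐ ω ∂P, (-(V i)) ω ∈ Set.Icc (-(c - D)) (-(-c - D)) := by
    intro i
    filter_upwards [hVbdd i] with ω hω
    constructor <;> simp only [Pi.neg_apply] <;> [linarith [hω.2]; linarith [hω.1]]
  have hNVmean : ∀ i, ∫ ω, (-(V i)) ω ∂P = 0 := by
    intro i
    simp only [Pi.neg_apply]
    rw [integral_neg, hVmean i, neg_zero]
  have hup := hoeffding_one_sided P hm V hVmeas hVindep (-c - D) (c - D)
    (by linarith) hVbdd hVmean (m * t) (by positivity)
  have hdown := hoeffding_one_sided P hm (fun i => -(V i)) (fun i => (hVmeas i).neg)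
    hNVindep (-(c - D)) (-(-c - D)) (by linarith) hNVbdd hNVmean (m * t) (by positivity)
  have hexp_up : (-2 * (↑m * t) ^ 2 / (↑m * (c - D - (-c - D)) ^ 2))
      = -(m * t ^ 2) / (2 * c ^ 2) := by
    have : (c - D - (-c - D)) = 2 * c := by ring
    rw [this]
    field_simp
  have hexp_down : (-2 * (↑m * t) ^ 2 / (↑m * (-(-c - D) - -(c - D)) ^ 2))
      = -(m * t ^ 2) / (2 * c ^ 2) := by
    have : (-(-c - D) - -(c - D)) = 2 * c := by ring
    rw [this]
    field_simp
  rw [hexp_up] at hup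
  rw [hexp_down] at hdown
  have hsubset : {ω | t ≤ |(1 / m : ℝ) * ∑ i, W i ω - D|}
      ⊆ {ω | m * t ≤ (∑ i, V i) ω} ∪ {ω | m * t ≤ (∑ i, fun ω => -(V i) ω) ω} := by
    intro ω hω
    simp only [Set.mem_setOf_eq] at hω
    have hsum : (∑ i, V i) ω = ∑ i, W i ω - m * D := by
      simp [hVdef, Finset.sum_sub_distrib, Finset.sum_apply]
    have habs : m * t ≤ |(∑ i, V i) ω| := by
      have h1 : |(1 / m : ℝ) * ∑ i, W i ω - D| = |(∑ i, V i) ω| / m := by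
        rw [hsum, ← abs_of_pos hm0, ← abs_div]
        congr 1
        field_simp
        rw [abs_of_pos hm0]
        ring
      rw [h1, le_div_iff₀ hm0] at hω
      linarith [hω]
    rcases abs_le.1 (le_refl |(∑ i, V i) ω|) with _
    rcases le_or_gt (m * t) ((∑ i, V i) ω) with h | h
    · left; exact h
    · right
      simp only [Set.mem_setOf_eq, Finset.sum_apply]
      have : |(∑ i, V i) ω| = -((∑ i, V i) ω) := by
        rcases abs_cases ((∑ i, V i) ω) with ⟨h1, h2⟩ | ⟨h1, h2⟩
        · nlinarith [mul_pos hm0 ht]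
        · exact h1
      rw [this] at habs
      have : -((∑ i, V i) ω) = ∑ i, -(V i ω) := by
        simp [Finset.sum_apply, Finset.sum_neg_distrib]
      linarith [habs, this.symm.le]
  calc (P {ω | t ≤ |(1 / m : ℝ) * ∑ i, W i ω - D|}).toReal
      ≤ ((P {ω | m * t ≤ (∑ i, V i) ω})
          + P {ω | m * t ≤ (∑ i, fun ω => -(V i) ω) ω}).toReal := by
        refine ENNReal.toReal_mono ?_ ((measure_mono hsubset).trans (measure_union_le _ _))
        exact ENNReal.add_ne_top.2 ⟨measure_ne_top _ _, measure_ne_top _ _⟩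
  _ = (P {ω | m * t ≤ (∑ i, V i) ω}).toReal
        + (P {ω | m * t ≤ (∑ i, fun ω => -(V i) ω) ω}).toReal :=
      ENNReal.toReal_add (measure_ne_top _ _) (measure_ne_top _ _)
  _ ≤ exp (-(m * t ^ 2) / (2 * c ^ 2)) + exp (-(m * t ^ 2) / (2 * c ^ 2)) := by
      refine add_le_add hup ?_
      convert hdown using 4
      rfl
      rfl
  _ = 2 * exp (-(m * t ^ 2) / (2 * c ^ 2)) := by ring

lemma sq_sum_expand {K : ℕ} (w : Fin K → ℝ) (hw : ∑ k, w k = 1) (u : ℝ) (v : Fin K → ℝ) :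
    (u - ∑ k, w k * v k) ^ 2 = ∑ j, ∑ k, w j * w k * ((u - v j) * (u - v k)) := by
  have h1 : u - ∑ k, w k * v k = ∑ j, w j * (u - v j) := by
    rw [Finset.sum_congr rfl (fun j _ => mul_sub (w j) u (v j)),
      Finset.sum_sub_distrib, ← Finset.sum_mul, hw, one_mul]
  rw [h1, sq, Finset.sum_mul_sum]
  exact Finset.sum_congr rfl fun j _ => Finset.sum_congr rfl fun k _ => by ring

end HoeffdingAux

/-- Uniform concentration of the empirical stacking loss over the simplex: if the
pseudo-outcome and the candidate models are a.s. bounded by `L`, then with probability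
at least `1 − δ`, `sup_{w ∈ Δ_K} |ℓ̂(w) − ℓ(w)| ≤ 4√2 · L² · √(log(2(K+1)²/δ)/m)`. -/
theorem empirical_stacking_loss_uniform_concentration
    {Ω 𝒳 : Type*} [MeasurableSpace Ω] [MeasurableSpace 𝒳]
    (P : Measure Ω) [IsProbabilityMeasure P]
    (X : Ω → 𝒳) (Y0 Y1 Z : Ω → ℝ)
    (hX : Measurable X) (hY0 : Measurable Y0) (hY1 : Measurable Y1) (hZ : Measurable Z)
    (hZval : ∀ ω, Z ω = 0 ∨ Z ω = 1)
    (p : ℝ) (hp : p ∈ Set.Ioo (0 : ℝ) 1)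
    (hZp : P {ω | Z ω = 1} = ENNReal.ofReal p)
    (hindep : IndepFun Z (fun ω => (X ω, Y0 ω, Y1 ω)) P)
    (Y : Ω → ℝ) (hY : ∀ ω, Y ω = Z ω * Y1 ω + (1 - Z ω) * Y0 ω)
    (μ0 μ1 : 𝒳 → ℝ) (hμ0 : Measurable μ0) (hμ1 : Measurable μ1)
    (K : ℕ) (τk : Fin K → 𝒳 → ℝ) (hτk : ∀ k, Measurable (τk k))
    -- the pseudo-outcome built from the generic sample `(X, Y, Z)`
    (τhat : Ω → ℝ)
    (hτhat : ∀ ω, τhat ω = (μ1 (X ω) - μ0 (X ω))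
        + (Y ω - μ1 (X ω)) * Z ω / p - (Y ω - μ0 (X ω)) * (1 - Z ω) / (1 - p))
    -- boundedness: |τ̂| ≤ L and |τ̂_k(X)| ≤ L almost surely
    (L : ℝ) (hL : 0 < L)
    (hbτhat : ∀ᵐ ω ∂P, |τhat ω| ≤ L)
    (hbτk : ∀ k, ∀ᵐ ω ∂P, |τk k (X ω)| ≤ L)
    -- the i.i.d. samples
    (m : ℕ) (hm : 0 < m)
    (Xs : Fin m → Ω → 𝒳) (Ys Zs : Fin m → Ω → ℝ)
    (hXs : ∀ i, Measurable (Xs i)) (hYs : ∀ i, Measurable (Ys i))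
    (hZs : ∀ i, Measurable (Zs i))
    (hiid : iIndepFun (fun i ω => (Xs i ω, Ys i ω, Zs i ω)) P)
    (hident : ∀ i, Measure.map (fun ω => (Xs i ω, Ys i ω, Zs i ω)) P
        = Measure.map (fun ω => (X ω, Y ω, Z ω)) P)
    -- the per-sample pseudo-outcomes
    (τhats : Fin m → Ω → ℝ)
    (hτhats : ∀ i ω, τhats i ω = (μ1 (Xs i ω) - μ0 (Xs i ω))
        + (Ys i ω - μ1 (Xs i ω)) * Zs i ω / p
        - (Ys i ω - μ0 (Xs i ω)) * (1 - Zs i ω) / (1 - p))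
    (δ : ℝ) (hδ : δ ∈ Set.Ioo (0 : ℝ) 1) :
    1 - ENNReal.ofReal δ ≤
      P {ω | ∀ w : Fin K → ℝ, (∀ k, 0 ≤ w k) → (∑ k, w k = 1) →
        |(1 / (m : ℝ)) * ∑ i, (τhats i ω - ∑ k, w k * τk k (Xs i ω)) ^ 2
            - ∫ ω', (τhat ω' - ∑ k, w k * τk k (X ω')) ^ 2 ∂P|
          ≤ 4 * Real.sqrt 2 * L ^ 2
              * Real.sqrt (Real.log (2 * (K + 1) ^ 2 / δ) / m)} := by
  obtain ⟨hδ0, hδ1⟩ := hδ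
  have hm0 : (0:ℝ) < m := Nat.cast_pos.2 hm
  -- abbreviations
  set f : 𝒳 × ℝ × ℝ → ℝ := fun q => (μ1 q.1 - μ0 q.1)
      + (q.2.1 - μ1 q.1) * q.2.2 / p - (q.2.1 - μ0 q.1) * (1 - q.2.2) / (1 - p) with hfdef
  have hfm : Measurable f := by
    apply Measurable.sub
    apply Measurable.add
    · exact (hμ1.comp measurable_fst).sub (hμ0.comp measurable_fst)
    · exact (((measurable_fst.comp measurable_snd).sub
        (hμ1.comp measurable_fst)).mul (measurable_snd.comp measurable_snd)).div_const p
    · exact (((measurable_fst.comp measurable_snd).sub (hμ0.comp measurable_fst)).mul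
        (measurable_const.sub (measurable_snd.comp measurable_snd))).div_const (1 - p)
  set g : Fin K → Fin K → 𝒳 × ℝ × ℝ → ℝ :=
    fun j k q => (f q - τk j q.1) * (f q - τk k q.1) with hgdef
  have hgm : ∀ j k, Measurable (g j k) := fun j k =>
    (hfm.sub ((hτk j).comp measurable_fst)).mul (hfm.sub ((hτk k).comp measurable_fst))
  have hYm : Measurable Y := by
    have : Y = fun ω => Z ω * Y1 ω + (1 - Z ω) * Y0 ω := funext hY
    rw [this]
    exact (hZ.mul hY1).add ((measurable_const.sub hZ).mul hY0)
  set Φ : Ω → 𝒳 × ℝ × ℝ := fun ω => (X ω, Y ω, Z ω) with hΦdef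
  have hΦm : Measurable Φ := hX.prodMk (hYm.prodMk hZ)
  set Φs : Fin m → Ω → 𝒳 × ℝ × ℝ := fun i ω => (Xs i ω, Ys i ω, Zs i ω) with hΦsdef
  have hΦsm : ∀ i, Measurable (Φs i) := fun i => (hXs i).prodMk ((hYs i).prodMk (hZs i))
  have hτhat_eq : ∀ ω, τhat ω = f (Φ ω) := fun ω => hτhat ω
  have hτhats_eq : ∀ i ω, τhats i ω = f (Φs i ω) := fun i ω => hτhats i ω
  -- the good set
  set A : Set (𝒳 × ℝ × ℝ) := {q | |f q| ≤ L} ∩ ⋂ k, {q | |τk k q.1| ≤ L} with hAdef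
  have hAm : MeasurableSet A := by
    refine (measurableSet_le hfm.abs measurable_const).inter
      (MeasurableSet.iInter fun k => measurableSet_le
        ((hτk k).comp measurable_fst).abs measurable_const)
  have hA1 : ∀ᵐ ω ∂P, Φ ω ∈ A := by
    have h1 : ∀ᵐ ω ∂P, ∀ k, |τk k (X ω)| ≤ L := (MeasureTheory.ae_all_iff).2 hbτk
    filter_upwards [hbτhat, h1] with ω h2 h3
    refine ⟨by simpa [← hτhat_eq ω] using h2, ?_⟩
    simp only [Set.mem_iInter, Set.mem_setOf_eq]
    exact fun k => h3 k
  have hAs : ∀ i, ∀ᵐ ω ∂P, Φs i ω ∈ A := by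
    intro i
    have hmap : ∀ᵐ q ∂(Measure.map Φ P), q ∈ A := (ae_map_iff hΦm.aemeasurable hAm).2 hA1
    have hmap' : ∀ᵐ q ∂(Measure.map (Φs i) P), q ∈ A := by
      show ∀ᵐ q ∂(Measure.map (fun ω => (Xs i ω, Ys i ω, Zs i ω)) P), q ∈ A
      rw [hident i]
      exact hmap
    exact (ae_map_iff (hΦsm i).aemeasurable hAm).1 hmap'
  have hgbound : ∀ q ∈ A, ∀ j k, |g j k q| ≤ 4 * L ^ 2 := by
    intro q hq j k
    obtain ⟨hqf, hqτ⟩ := hq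
    simp only [Set.mem_iInter, Set.mem_setOf_eq] at hqτ hqf
    have h1 : |f q - τk j q.1| ≤ 2 * L := by
      calc |f q - τk j q.1| ≤ |f q| + |τk j q.1| := abs_sub _ _
      _ ≤ 2 * L := by linarith [hqτ j]
    have h2 : |f q - τk k q.1| ≤ 2 * L := by
      calc |f q - τk k q.1| ≤ |f q| + |τk k q.1| := abs_sub _ _
      _ ≤ 2 * L := by linarith [hqτ k]
    calc |g j k q| = |f q - τk j q.1| * |f q - τk k q.1| := abs_mul _ _
    _ ≤ (2 * L) * (2 * L) := mul_le_mul h1 h2 (abs_nonneg _) (by positivity)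
    _ = 4 * L ^ 2 := by ring
  -- population means
  set D : Fin K → Fin K → ℝ := fun j k => ∫ ω, g j k (Φ ω) ∂P with hDdef
  have hmean_sample : ∀ j k i, ∫ ω, g j k (Φs i ω) ∂P = D j k := by
    intro j k i
    have h1 : ∫ ω, g j k (Φs i ω) ∂P = ∫ q, g j k q ∂(Measure.map (Φs i) P) :=
      (integral_map (hΦsm i).aemeasurable (hgm j k).aestronglyMeasurable).symm
    have h2 : ∫ q, g j k q ∂(Measure.map Φ P) = ∫ ω, g j k (Φ ω) ∂P :=
      integral_map hΦm.aemeasurable (hgm j k).aestronglyMeasurable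
    rw [h1]
    show ∫ q, g j k q ∂(Measure.map (fun ω => (Xs i ω, Ys i ω, Zs i ω)) P) = D j k
    rw [hident i, h2]
  -- the i.i.d. per-pair variables and Hoeffding
  set R : ℝ := 2 * ((K : ℝ) + 1) ^ 2 / δ with hRdef
  have hR1 : 1 < R := by
    rw [hRdef, lt_div_iff₀ hδ0]
    nlinarith [sq_nonneg ((K:ℝ) + 1), Nat.cast_nonneg (α := ℝ) K]
  have hR0 : 0 < R := lt_trans one_pos hR1
  have hlogR : 0 < Real.log R := Real.log_pos hR1
  set tt : ℝ := 4 * Real.sqrt 2 * L ^ 2 * Real.sqrt (Real.log R / m) with httdef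
  have htt0 : 0 < tt :=
    mul_pos (by positivity) (Real.sqrt_pos.2 (div_pos hlogR hm0))
  have htail : ∀ j k, P {ω | tt ≤ |(1 / m : ℝ) * ∑ i, g j k (Φs i ω) - D j k|}
      ≤ ENNReal.ofReal (δ / ((K : ℝ) + 1) ^ 2) := by
    intro j k
    have hbdd : ∀ i, ∀ᵐ ω ∂P, |g j k (Φs i ω)| ≤ 4 * L ^ 2 := by
      intro i
      filter_upwards [hAs i] with ω hω using hgbound _ hω j k
    have hWm : ∀ i, Measurable (fun ω => g j k (Φs i ω)) :=
      fun i => (hgm j k).comp (hΦsm i)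
    have hWindep : iIndepFun (fun i ω => g j k (Φs i ω)) P :=
      hiid.comp (fun _ => g j k) (fun _ => hgm j k)
    have hhoef := hoeffding_two_sided P hm (fun i ω => g j k (Φs i ω)) hWm hWindep
      (4 * L ^ 2) (by positivity) hbdd (D j k) (hmean_sample j k) tt htt0
    have hexp : -((m : ℝ) * tt ^ 2) / (2 * (4 * L ^ 2) ^ 2) = -Real.log R := by
      have h1 : tt ^ 2 = 32 * L ^ 4 * (Real.log R / m) := by
        rw [httdef, mul_pow, mul_pow, mul_pow,
          Real.sq_sqrt (le_of_lt (div_pos hlogR hm0)), Real.sq_sqrt (by norm_num : (0:ℝ) ≤ 2)]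
        ring
      rw [h1]
      field_simp
      ring
    rw [hexp] at hhoef
    have h2exp : 2 * Real.exp (-Real.log R) = δ / ((K : ℝ) + 1) ^ 2 := by
      rw [Real.exp_neg, Real.exp_log hR0, hRdef]
      field_simp
    rw [h2exp] at hhoef
    refine (ENNReal.le_ofReal_iff_toReal_le (measure_ne_top _ _) (by positivity)).2 ?_
    exact hhoef
  -- the good event
  set T : Fin K → Fin K → Set Ω :=
    fun j k => {ω | tt ≤ |(1 / m : ℝ) * ∑ i, g j k (Φs i ω) - D j k|} with hTdef
  have hTm : ∀ j k, MeasurableSet (T j k) := by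
    intro j k
    refine measurableSet_le measurable_const ?_
    exact (((Finset.measurable_sum Finset.univ (fun i _ => (hgm j k).comp
      (hΦsm i))).const_mul _).sub measurable_const).abs
  set E : Set Ω := ⋂ j, ⋂ k, (T j k)ᶜ with hEdef
  have hEm : MeasurableSet E :=
    MeasurableSet.iInter fun j => MeasurableSet.iInter fun k => (hTm j k).compl
  have hEcompl : P Eᶜ ≤ ENNReal.ofReal δ := by
    have h1 : Eᶜ = ⋃ j, ⋃ k, T j k := by
      rw [hEdef]
      simp [Set.compl_iInter]
    rw [h1]
    calc P (⋃ j, ⋃ k, T j k) ≤ ∑ j : Fin K, P (⋃ k, T j k) := by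
          refine (measure_iUnion_le _).trans ?_
          rw [tsum_fintype]
    _ ≤ ∑ _j : Fin K, ∑ _k : Fin K, ENNReal.ofReal (δ / ((K : ℝ) + 1) ^ 2) := by
          refine Finset.sum_le_sum fun j _ => ?_
          refine (measure_iUnion_le _).trans ?_
          rw [tsum_fintype]
          exact Finset.sum_le_sum fun k _ => htail j k
    _ = (K : ℝ≥0∞) * ((K : ℝ≥0∞) * ENNReal.ofReal (δ / ((K : ℝ) + 1) ^ 2)) := by
          simp [Finset.sum_const, Finset.card_univ, nsmul_eq_mul, mul_assoc]
    _ ≤ ENNReal.ofReal δ := by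
          rw [← ENNReal.ofReal_natCast K, ← ENNReal.ofReal_mul (Nat.cast_nonneg K),
            ← ENNReal.ofReal_mul (Nat.cast_nonneg K)]
          refine ENNReal.ofReal_le_ofReal ?_
          rw [div_eq_mul_inv]
          have hK1 : (0:ℝ) < ((K : ℝ) + 1) ^ 2 := by positivity
          rw [mul_comm (δ) _, ← mul_assoc, ← mul_assoc]
          rw [mul_comm ((K:ℝ) * (K:ℝ) * (((K:ℝ)+1)^2)⁻¹) δ]
          nth_rewrite 2 [← mul_one δ]
          refine mul_le_mul_of_nonneg_left ?_ hδ0.le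
          rw [mul_inv_le_iff₀ hK1, one_mul]
          nlinarith [Nat.cast_nonneg (α := ℝ) K]
  -- event inclusion
  have hsubset : E ⊆ {ω | ∀ w : Fin K → ℝ, (∀ k, 0 ≤ w k) → (∑ k, w k = 1) →
      |(1 / (m : ℝ)) * ∑ i, (τhats i ω - ∑ k, w k * τk k (Xs i ω)) ^ 2
          - ∫ ω', (τhat ω' - ∑ k, w k * τk k (X ω')) ^ 2 ∂P| ≤ tt} := by
    intro ω hω
    simp only [hEdef, Set.mem_iInter, Set.mem_compl_iff, hTdef, Set.mem_setOf_eq,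
      not_le] at hω
    intro w hw0 hw1
    -- empirical side
    have hemp : (1 / (m : ℝ)) * ∑ i, (τhats i ω - ∑ k, w k * τk k (Xs i ω)) ^ 2
        = ∑ j, ∑ k, w j * w k * ((1 / (m : ℝ)) * ∑ i, g j k (Φs i ω)) := by
      have h1 : ∀ i, (τhats i ω - ∑ k, w k * τk k (Xs i ω)) ^ 2
          = ∑ j, ∑ k, w j * w k * g j k (Φs i ω) := by
        intro i
        rw [hτhats_eq i ω]
        exact sq_sum_expand w hw1 (f (Φs i ω)) (fun k => τk k (Xs i ω))
      rw [Finset.sum_congr rfl (fun i _ => h1 i)]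
      rw [Finset.sum_comm]
      rw [Finset.mul_sum]
      refine Finset.sum_congr rfl fun j _ => ?_
      rw [Finset.sum_comm, Finset.mul_sum]
      refine Finset.sum_congr rfl fun k _ => ?_
      rw [Finset.mul_sum, Finset.mul_sum, Finset.mul_sum]
      apply Finset.sum_congr rfl
      intro i _
      ring
    -- integrability of the population pieces
    have hgint : ∀ j k, Integrable (fun ω' => g j k (Φ ω')) P := by
      intro j k
      refine Integrable.mono' (integrable_const (4 * L ^ 2))
        ((hgm j k).comp hΦm).aestronglyMeasurable ?_
      filter_upwards [hA1] with ω' hω' using hgbound _ hω' j k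
    have hpop : ∫ ω', (τhat ω' - ∑ k, w k * τk k (X ω')) ^ 2 ∂P
        = ∑ j, ∑ k, w j * w k * D j k := by
      have h1 : ∀ ω', (τhat ω' - ∑ k, w k * τk k (X ω')) ^ 2
          = ∑ j, ∑ k, w j * w k * g j k (Φ ω') := by
        intro ω'
        rw [hτhat_eq ω']
        exact sq_sum_expand w hw1 (f (Φ ω')) (fun k => τk k (X ω'))
      rw [integral_congr_ae (Filter.Eventually.of_forall h1)]
      rw [integral_finset_sum _ (fun j _ => integrable_finset_sum _
        (fun k _ => ((hgint j k).const_mul _)))]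
      refine Finset.sum_congr rfl fun j _ => ?_
      rw [integral_finset_sum _ (fun k _ => ((hgint j k).const_mul _))]
      refine Finset.sum_congr rfl fun k _ => ?_
      rw [MeasureTheory.integral_const_mul]
    rw [hemp, hpop, ← Finset.sum_sub_distrib]
    rw [Finset.sum_congr rfl (fun j (_ : j ∈ Finset.univ) => (Finset.sum_sub_distrib _ _).symm)]
    calc |∑ j, ∑ k, (w j * w k * ((1 / (m:ℝ)) * ∑ i, g j k (Φs i ω)) - w j * w k * D j k)|
        ≤ ∑ j, |∑ k, (w j * w k * ((1 / (m:ℝ)) * ∑ i, g j k (Φs i ω)) - w j * w k * D j k)| :=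
          Finset.abs_sum_le_sum_abs _ _
    _ ≤ ∑ j, ∑ k, |w j * w k * ((1 / (m:ℝ)) * ∑ i, g j k (Φs i ω)) - w j * w k * D j k| :=
          Finset.sum_le_sum fun j _ => Finset.abs_sum_le_sum_abs _ _
    _ ≤ ∑ j, ∑ k, w j * w k * tt := by
          refine Finset.sum_le_sum fun j _ => Finset.sum_le_sum fun k _ => ?_
          rw [← mul_sub, abs_mul, abs_of_nonneg (mul_nonneg (hw0 j) (hw0 k))]
          exact mul_le_mul_of_nonneg_left (le_of_lt (hω j k)) (mul_nonneg (hw0 j) (hw0 k))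
    _ = tt := by
          have h1 : ∀ j, ∑ k, w j * w k * tt = w j * tt := by
            intro j
            rw [Finset.sum_congr rfl (fun k (_ : k ∈ Finset.univ) =>
              (by ring : w j * w k * tt = w j * tt * w k))]
            rw [← Finset.mul_sum, hw1, mul_one]
          rw [Finset.sum_congr rfl (fun j _ => h1 j), ← Finset.sum_mul, hw1, one_mul]
  -- conclude
  have h1 : 1 - ENNReal.ofReal δ ≤ P E := by
    have h2 : P E + P Eᶜ = 1 := by
      rw [measure_add_measure_compl hEm, measure_univ]
    refine tsub_le_iff_right.2 ?_
    calc (1 : ℝ≥0∞) = P E + P Eᶜ := h2.symm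
    _ ≤ P E + ENNReal.ofReal δ := add_le_add le_rfl hEcompl
  exact h1.trans (measure_mono hsubset)
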